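/- Let x be a ϖ_{n-r}-permissible alcove with associated sequences J^{(i)} and block data as above. If for some q the sequence j^{(1)}_q, j^{(2)}_q, ..., j^{(n+1)}_q changes at every step (f_q = n+1), then j^{(1)}_q = j^{(n+1)}_q = n; in particular, the permutation σ ∈ S_r defined by j^{(1)}_q = j^{(n+1)}_{σ(q)} fixes q. -/
import Mathlib


open Finset

/-- Standard basis vector `e_j` in `ℤⁿ`. -/
def ev (n : ℕ) (j : Fin n) : Fin n → ℤ := fun k => if k = j then 1 else 0

/-- The coweight `ϖ_t = e_1 + ⋯ + e_t` (t ones followed by zeros). -/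
def varpi (n t : ℕ) : Fin n → ℤ := fun j => if (j : ℕ) < t then 1 else 0

/-- Dominance order `μ ⪯ λ`: equal total sums, partial sums of `μ` bounded by those of `λ`. -/
def DomLE {n : ℕ} (μ lam : Fin n → ℤ) : Prop :=
  (∑ i, μ i = ∑ i, lam i) ∧
  ∀ k : Fin n, ∑ i ∈ Finset.Iic k, μ i ≤ ∑ i ∈ Finset.Iic k, lam i

/-- A coweight is dominant iff its coordinates are weakly decreasing. -/
def IsDominant {n : ℕ} (v : Fin n → ℤ) : Prop := ∀ i j : Fin n, i ≤ j → v j ≤ v i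

/-- The weakly decreasing rearrangement `dom(v)` of `v`. -/
noncomputable def domOf {n : ℕ} (v : Fin n → ℤ) : Fin n → ℤ :=
  v ∘ Tuple.sort (fun i => -v i)

/-- `succA x i` is `x^{(i+1)}`, with the convention `x^{(n+1)} = x^{(1)} + (1,…,1)`. -/
def succA {n : ℕ} (x : Fin n → Fin n → ℤ) (i : Fin n) : Fin n → ℤ :=
  if h : (i : ℕ) + 1 < n then x ⟨(i : ℕ) + 1, h⟩ else fun j => x ⟨0, i.pos⟩ j + 1

/-- A tuple `(x^{(1)},…,x^{(n)})` is an alcove. -/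
def IsAlcove {n : ℕ} (x : Fin n → Fin n → ℤ) : Prop :=
  (∀ i : Fin n, ∀ j, x i j ≤ succA x i j) ∧
  (∀ i : Fin n, (i : ℕ) + 1 < n → ∑ j, succA x i j = (∑ j, x i j) + 1)

/-- `P` is the permutation `P(x)` of the alcove `x`: `x^{(i+1)} = x^{(i)} + e_{P(x)(i)}`. -/
def IsPermOf {n : ℕ} (x : Fin n → Fin n → ℤ) (P : Equiv.Perm (Fin n)) : Prop :=
  ∀ i : Fin n, ∀ j, succA x i j = x i j + ev n (P i) j

/-- A permutation acts on `ℤⁿ` by permuting coordinates: `(σv)_{σ(i)} = v_i`. -/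
def permAct {n : ℕ} (σ : Equiv.Perm (Fin n)) (v : Fin n → ℤ) : Fin n → ℤ :=
  fun j => v (σ.symm j)

/-- The `n`-cycle `c = (1 2 ⋯ n)`. -/
def cyc (n : ℕ) [NeZero n] : Equiv.Perm (Fin n) := Equiv.addRight 1

/-- Rotation of alcoves. -/
def rotA {n : ℕ} [NeZero n] (x : Fin n → Fin n → ℤ) : Fin n → Fin n → ℤ := fun i =>
  if h : (i : ℕ) + 1 < n then
    permAct (cyc n)⁻¹ (fun j => x ⟨(i : ℕ) + 1, h⟩ j - varpi n 1 j)
  else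
    fun j => permAct (cyc n)⁻¹ (x 0) j + varpi n (n - 1) j

/-- An alcove is `λ`-permissible if `dom(x^{(i)} - ϖ_{i-1}) ⪯ λ` for all `i`. -/
noncomputable def Permissible {n : ℕ} (lam : Fin n → ℤ) (x : Fin n → Fin n → ℤ) : Prop :=
  ∀ i : Fin n, DomLE (domOf (fun j => x i j - varpi n (i : ℕ) j)) lam

/-- The Kottwitz–Rapoport relation `i ⊴_x j` (six-case rule). -/
def TriLE {n : ℕ} (x : Fin n → Fin n → ℤ) (P : Equiv.Perm (Fin n)) (i j : Fin n) : Prop :=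
  (x ⟨0, i.pos⟩ j < x ⟨0, i.pos⟩ i) ∨
  (x ⟨0, i.pos⟩ i = x ⟨0, i.pos⟩ j ∧
    ((P.symm i < i ∧ P.symm j < j ∧ j ≤ i) ∨
     (P.symm i < i ∧ j ≤ P.symm j) ∨
     (P.symm i = i ∧ P.symm j = j ∧ i = j) ∨
     (P.symm i = i ∧ j < P.symm j) ∨
     (i < P.symm i ∧ j < P.symm j ∧ j ≤ i)))
theorem fq_max_fixed (n r : ℕ) [NeZero n] (hr1 : 1 ≤ r) (hrn : r ≤ n - 1)
    (x : Fin n → Fin n → ℤ) (hx : IsAlcove x)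
    (hxperm : Permissible (varpi n (n - r)) x)
    (P : Equiv.Perm (Fin n)) (hP : IsPermOf x P)
    (J : Fin (n + 1) → Fin r → Fin n)
    (hJinj : Function.Injective (J 0))
    (hJ0 : ∀ j : Fin n, x 0 j = 0 ↔ ∃ q, J 0 q = j)
    (hJrec : ∀ i : Fin n, ∀ q,
      J i.succ q = if J i.castSucc q = P i then i else J i.castSucc q)
    (σ : Equiv.Perm (Fin r)) (hσ : ∀ p : Fin r, J 0 p = J (Fin.last n) (σ p))
    (q : Fin r)
    (hall : ∀ i : Fin n, J i.succ q ≠ J i.castSucc q) :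
    (J 0 q : ℕ) = n - 1 ∧ J (Fin.last n) q = J 0 q ∧ σ q = q := by
  have hn : 0 < n := Nat.pos_of_ne_zero (NeZero.ne n)
  have hA : ∀ i : Fin n, J i.castSucc q = P i ∧ J i.succ q = i := by
    intro i
    have h := hJrec i q
    by_cases hc : J i.castSucc q = P i
    · rw [if_pos hc] at h
      exact ⟨hc, h⟩
    · rw [if_neg hc] at h
      exact absurd h (hall i)
  have hB : ∀ (i : Fin n) (h : (i : ℕ) + 1 < n), P ⟨(i : ℕ) + 1, h⟩ = i := by
    intro i h
    have h1 := (hA ⟨(i : ℕ) + 1, h⟩).1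
    have h2 := (hA i).2
    have hcs : (⟨(i : ℕ) + 1, h⟩ : Fin n).castSucc = i.succ := by
      ext; simp
    rw [hcs, h2] at h1
    exact h1.symm
  have hC : ((P 0 : Fin n) : ℕ) = n - 1 := by
    by_contra hne
    have hlt : ((P 0 : Fin n) : ℕ) + 1 < n := by
      have := (P 0).isLt; omega
    have hpp := hB (P 0) hlt
    have heq : (⟨((P 0 : Fin n) : ℕ) + 1, hlt⟩ : Fin n) = 0 := P.injective hpp
    have := congrArg Fin.val heq
    simp at this
  have hJ0q : J 0 q = P 0 := by
    have h1 := (hA 0).1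
    have : ((0 : Fin n).castSucc : Fin (n + 1)) = 0 := by ext; simp
    rwa [this] at h1
  have hval : (J 0 q : ℕ) = n - 1 := by rw [hJ0q]; exact hC
  have hL : J (Fin.last n) q = J 0 q := by
    have h2 := (hA ⟨n - 1, by omega⟩).2
    have hls : (⟨n - 1, by omega⟩ : Fin n).succ = Fin.last n := by
      ext; simp; omega
    rw [hls] at h2
    rw [h2]
    ext
    simp [hval]
  have hinj : Function.Injective (J (Fin.last n)) := by
    intro a b hab
    obtain ⟨a', rfl⟩ := σ.surjective a
    obtain ⟨b', rfl⟩ := σ.surjective b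
    rw [← hσ a', ← hσ b'] at hab
    exact congrArg σ (hJinj hab)
  refine ⟨hval, hL, hinj ?_⟩
  rw [← hσ q, hL]
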